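/- Let A be a skew left brace, λ its lambda map, and Λ_{Aᵒᵖ} = (A,·) ⋊_{λᵒᵖ} (A,∘). Then (x,1) ∈ Z(Λ_{Aᵒᵖ}) if and only if x ∈ Z(A,·) ∩ Fix(λ), where Fix(λ) = {x ∈ A : λ_a(x) = x for all a ∈ A}. -/

import Mathlib

/-- A skew left brace: a type with a group structure `(A, *)` (the additive group,
written multiplicatively) and a second group structure `(A, ∘)` (given by `circ`),
satisfying `a ∘ (b * c) = (a ∘ b) * a⁻¹ * (a ∘ c)`. -/
class SkewLeftBrace (A : Type*) extends Group A where
  circ : A → A → A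
  circ_assoc : ∀ a b c : A, circ (circ a b) c = circ a (circ b c)
  one_circ : ∀ a : A, circ 1 a = a
  circ_one : ∀ a : A, circ a 1 = a
  cinv : A → A
  cinv_circ : ∀ a : A, circ (cinv a) a = 1
  compat : ∀ a b c : A, circ a (b * c) = circ a b * a⁻¹ * circ a c

namespace SkewLeftBrace

variable {A : Type*} [SkewLeftBrace A]

/-- Type synonym for `A` carrying the multiplicative group `(A, ∘)`. -/
def Circ (A : Type*) := A

def toCirc {A : Type*} : A → Circ A := fun a => a
def ofCirc {A : Type*} : Circ A → A := fun a => a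

instance Circ.instGroup : Group (Circ A) where
  mul a b := toCirc (circ (ofCirc a) (ofCirc b))
  one := toCirc 1
  inv a := toCirc (cinv (ofCirc a))
  mul_assoc a b c := circ_assoc (A := A) a b c
  one_mul a := one_circ (A := A) a
  mul_one a := circ_one (A := A) a
  inv_mul_cancel a := cinv_circ (A := A) a

/-- The lambda map `λ_a(b) = a⁻¹ * (a ∘ b)`. -/
def lam (a b : A) : A := a⁻¹ * circ a b

/-- The opposite lambda map `λᵒᵖ_a(b) = (a ∘ b) * a⁻¹`. -/
def lamOp (a b : A) : A := circ a b * a⁻¹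

lemma circ_cinv (a : A) : circ a (cinv a) = 1 := mul_inv_cancel (toCirc a)

lemma circ_inv (a b : A) : circ a b⁻¹ = a * (circ a b)⁻¹ * a := by
  have h := compat a b b⁻¹
  rw [mul_inv_cancel, circ_one] at h
  have h2 : circ a b * a⁻¹ * circ a b⁻¹ = a := h.symm
  calc circ a b⁻¹ = (circ a b * a⁻¹)⁻¹ * (circ a b * a⁻¹ * circ a b⁻¹) := by group
    _ = a * (circ a b)⁻¹ * a := by rw [h2]; group

/-- `λ_a` as an automorphism of `(A, *)`. -/
def lamEquiv (a : A) : A ≃* A where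
  toFun := lam a
  invFun b := circ (cinv a) (a * b)
  left_inv b := by
    show circ (cinv a) (a * (a⁻¹ * circ a b)) = b
    rw [mul_inv_cancel_left, ← circ_assoc, cinv_circ, one_circ]
  right_inv b := by
    show a⁻¹ * circ a (circ (cinv a) (a * b)) = b
    rw [← circ_assoc, circ_cinv, one_circ, inv_mul_cancel_left]
  map_mul' b c := by
    show a⁻¹ * circ a (b * c) = (a⁻¹ * circ a b) * (a⁻¹ * circ a c)
    rw [compat]; group

lemma lam_circ (a b c : A) : lam (circ a b) c = lam a (lam b c) := by
  unfold lam
  rw [circ_assoc, compat, circ_inv]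
  group

/-- The lambda map as a group homomorphism `(A, ∘) → Aut(A, *)`. -/
def lamHom : Circ A →* MulAut A where
  toFun a := lamEquiv (ofCirc a)
  map_one' := by
    ext b
    show lam (1 : A) b = b
    simp [lam, one_circ]
  map_mul' a b := by
    ext c
    rw [MulAut.mul_apply]
    exact lam_circ (ofCirc a) (ofCirc b) c

/-- `λᵒᵖ_a` as an automorphism of `(A, *)`. -/
def lamOpEquiv (a : A) : MulAut A := MulAut.conj a * lamEquiv a

lemma lamOpEquiv_apply (a b : A) : lamOpEquiv a b = lamOp a b := by
  show a * (a⁻¹ * circ a b) * a⁻¹ = circ a b * a⁻¹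
  group

lemma lamOp_circ (a b c : A) : lamOp (circ a b) c = lamOp a (lamOp b c) := by
  unfold lamOp
  rw [circ_assoc, compat, circ_inv]
  group

/-- The opposite lambda map as a group homomorphism `(A, ∘) → Aut(A, *)`. -/
def lamOpHom : Circ A →* MulAut A where
  toFun a := lamOpEquiv (ofCirc a)
  map_one' := by
    ext b
    rw [lamOpEquiv_apply]
    show circ (1 : A) b * (1 : A)⁻¹ = b
    rw [one_circ]; group
  map_mul' a b := by
    ext c
    rw [MulAut.mul_apply, lamOpEquiv_apply, lamOpEquiv_apply, lamOpEquiv_apply]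
    exact lamOp_circ (ofCirc a) (ofCirc b) c

/-- The group `Λ_{Aᵒᵖ} = (A,·) ⋊_{λᵒᵖ} (A,∘)`. -/
abbrev LambdaOp (A : Type*) [SkewLeftBrace A] := SemidirectProduct A (Circ A) lamOpHom

/-- The group `Λ_A = (A,·) ⋊_{λ} (A,∘)`. -/
abbrev Lambda (A : Type*) [SkewLeftBrace A] := SemidirectProduct A (Circ A) lamHom

/-- The skew brace commutator `A'`: the subgroup of `(A,·)` generated by all
`a*b*a⁻¹*b⁻¹` and all `a * λ_b(a⁻¹)`. -/
def braceCommutator (A : Type*) [SkewLeftBrace A] : Subgroup A :=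
  Subgroup.closure
    {x : A | (∃ a b : A, x = a * b * a⁻¹ * b⁻¹) ∨ (∃ a b : A, x = a * lam b a⁻¹)}

instance braceCommutator_normal : (braceCommutator A).Normal := by
  constructor
  intro x hx g
  have h1 : g * x * g⁻¹ * x⁻¹ ∈ braceCommutator A :=
    Subgroup.subset_closure (Or.inl ⟨g, x, rfl⟩)
  have h2 : g * x * g⁻¹ = (g * x * g⁻¹ * x⁻¹) * x := by group
  rw [h2]
  exact mul_mem h1 hx

/-- `Fix(λ) = {x : λ_a(x) = x for all a}`. -/
def fixLam (A : Type*) [SkewLeftBrace A] : Set A := {x | ∀ a, lam a x = x}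

/-- The annihilator `Ann(A) = Ker(λ) ∩ Z(A,·) ∩ Fix(λ)` as a set. -/
def annSet (A : Type*) [SkewLeftBrace A] : Set A :=
  {x | (∀ b, lam x b = b) ∧ (∀ a, a * x = x * a) ∧ (∀ a, lam a x = x)}

end SkewLeftBrace

open SkewLeftBrace

/-- `(x,1) ∈ Z(Λ_{Aᵒᵖ})` iff `x ∈ Z(A,·) ∩ Fix(λ)`. -/
theorem mem_center_lambdaOp_left_iff (A : Type*) [SkewLeftBrace A] (x : A) :
    (⟨x, 1⟩ : LambdaOp A) ∈ Subgroup.center (LambdaOp A) ↔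
      (x ∈ Subgroup.center A ∧ x ∈ fixLam A) := by
  rw [Subgroup.mem_center_iff]
  constructor
  · intro h
    have key : ∀ a b : A, a * lamOpEquiv b x = x * lamOpEquiv (1 : A) a := by
      intro a b
      have := congrArg SemidirectProduct.left (h ⟨a, toCirc b⟩)
      exact this
    have hone : ∀ a : A, lamOpEquiv (1 : A) a = a := by
      intro a
      rw [lamOpEquiv_apply]
      show circ (1 : A) a * (1 : A)⁻¹ = a
      rw [one_circ]; group
    constructor
    · rw [Subgroup.mem_center_iff]
      intro a
      have := key a 1
      have h1 : lamOpEquiv (1:A) x = x := hone x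
      rwa [h1, hone] at this
    · intro a
      have h1 := key 1 a
      rw [hone, one_mul, mul_one, lamOpEquiv_apply] at h1
      unfold lamOp at h1
      have hc : circ a x = x * a := by
        calc circ a x = circ a x * a⁻¹ * a := by group
          _ = x * a := by rw [h1]
      have hz : a * x = x * a := by
        have := key a 1
        have hx : lamOpEquiv (1:A) x = x := hone x
        rwa [hx, hone] at this
      unfold lam
      rw [hc, ← hz]; group
  · rintro ⟨hz, hf⟩ g
    rw [Subgroup.mem_center_iff] at hz
    have hop : ∀ a : A, lamOpEquiv a x = x := by
      intro a
      rw [lamOpEquiv_apply]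
      have := hf a
      unfold lam at this
      unfold lamOp
      have hc : circ a x = a * x := by
        calc circ a x = a * (a⁻¹ * circ a x) := by group
          _ = a * x := by rw [this]
      rw [hc, hz a]; group
    have hone : ∀ a : A, lamOpEquiv (1 : A) a = a := by
      intro a
      rw [lamOpEquiv_apply]
      show circ (1 : A) a * (1 : A)⁻¹ = a
      rw [one_circ]; group
    ext
    · show g.left * lamOpHom g.right x = x * lamOpHom (1 : Circ A) g.left
      have : lamOpHom g.right x = x := hop (ofCirc g.right)
      rw [this]
      have : lamOpHom (1 : Circ A) g.left = g.left := hone g.left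
      rw [this, hz g.left]
    · show g.right * (1 : Circ A) = (1 : Circ A) * g.right
      rw [mul_one, one_mul]
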